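/- Let G be an acyclic directed mixed graph on a finite vertex set V and let H be a head of G with tail T = tail_G(H). Then H = barren_G(H ∪ T); that is, H is exactly the set of vertices of H ∪ T having no non-trivial descendant in H ∪ T. -/
import Mathlib


open Finset

open scoped Classical

variable {V : Type} [Fintype V] [DecidableEq V]

/-- An acyclic directed mixed graph (ADMG): directed edges `dir` and a symmetric
irreflexive set of bidirected edges `bi`, with no directed cycle. -/
structure ADMG (V : Type) [Fintype V] [DecidableEq V] where
  dir : V → V → Prop
  bi : V → V → Prop
  bi_symm : ∀ {v w}, bi v w → bi w v
  bi_irrefl : ∀ v, ¬ bi v v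
  acyclic : ∀ v, ¬ Relation.TransGen dir v v

namespace ADMG

/-- Ancestors of (members of) `A`: vertices `w` with `w = a` or a directed path `w → ⋯ → a`
for some `a ∈ A`. -/
noncomputable def anc (G : ADMG V) (A : Finset V) : Finset V :=
  univ.filter fun w => ∃ a ∈ A, Relation.ReflTransGen G.dir w a

/-- Descendants of (members of) `A`. -/
noncomputable def dec (G : ADMG V) (A : Finset V) : Finset V :=
  univ.filter fun w => ∃ a ∈ A, Relation.ReflTransGen G.dir a w

/-- Parents of (members of) `A`. -/
noncomputable def pa (G : ADMG V) (A : Finset V) : Finset V :=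
  univ.filter fun w => ∃ a ∈ A, G.dir w a

/-- `barren_G(U)`: members of `U` with no non-trivial descendant in `U`. -/
noncomputable def barren (G : ADMG V) (U : Finset V) : Finset V :=
  U.filter fun v => G.dec {v} ∩ U = {v}

/-- `U` is barren if `barren_G(U) = U`. -/
def IsBarren (G : ADMG V) (U : Finset V) : Prop := G.barren U = U

/-- One bidirected step inside the induced subgraph `G_S`. -/
def biStep (G : ADMG V) (S : Finset V) (u w : V) : Prop :=
  u ∈ S ∧ w ∈ S ∧ G.bi u w

/-- District of (members of) `A` in the induced subgraph `G_S`: vertices joined to a member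
of `A` by a (possibly empty) bidirected path within `S`. -/
noncomputable def disIn (G : ADMG V) (S A : Finset V) : Finset V :=
  univ.filter fun w => ∃ a ∈ A, a ∈ S ∧ w ∈ S ∧ Relation.ReflTransGen (G.biStep S) a w

/-- District in the whole graph. -/
noncomputable def dis (G : ADMG V) (A : Finset V) : Finset V := G.disIn univ A

/-- A head: a nonempty barren set connected by bidirected paths in `G_{an_G(H)}`. -/
def IsHead (G : ADMG V) (H : Finset V) : Prop :=
  H.Nonempty ∧ G.IsBarren H ∧
    ∀ a ∈ H, ∀ b ∈ H, Relation.ReflTransGen (G.biStep (G.anc H)) a b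

/-- The tail of a head: `tail_G(H) = pa_G(D) ∪ (D ∖ H)` where `D = dis_{G_{an(H)}}(H)`. -/
noncomputable def tail (G : ADMG V) (H : Finset V) : Finset V :=
  G.pa (G.disIn (G.anc H) H) ∪ (G.disIn (G.anc H) H \ H)

end ADMG

/-- `Gbar` is a head-preserving completion of `G`: a complete supergraph (on the same
vertices) in which every head of `G` is still a head. -/
def IsHPC (G Gbar : ADMG V) : Prop :=
  (∀ v w, G.dir v w → Gbar.dir v w) ∧
  (∀ v w, G.bi v w → Gbar.bi v w) ∧
  (∀ v w : V, v ≠ w → Gbar.dir v w ∨ Gbar.dir w v ∨ Gbar.bi v w) ∧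
  (∀ H : Finset V, G.IsHead H → Gbar.IsHead H)

/-- Type of an edge on a path, read from left to right:
`u → w`, `u ← w`, or `u ↔ w`. -/
inductive EdgeType : Type
  | toRight
  | toLeft
  | biE

/-- The edge of the given type is present in `G` between `u` (left) and `w` (right). -/
def edgeOK (G : ADMG V) : EdgeType → V → V → Prop
  | .toRight, u, w => G.dir u w
  | .toLeft,  u, w => G.dir w u
  | .biE,     u, w => G.bi u w

/-- The edge has an arrowhead at its right endpoint. -/
def arrowAtRight : EdgeType → Prop
  | .toRight => True
  | .toLeft  => False
  | .biE     => True

/-- The edge has an arrowhead at its left endpoint. -/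
def arrowAtLeft : EdgeType → Prop
  | .toRight => False
  | .toLeft  => True
  | .biE     => True

/-- A path from `x` to `y` in the mixed graph `G`: distinct vertices `f 0, …, f n`
joined by edges of the recorded types. -/
structure GPath (G : ADMG V) (x y : V) where
  n : ℕ
  f : Fin (n + 1) → V
  inj : Function.Injective f
  first : f 0 = x
  last : f (Fin.last n) = y
  e : Fin n → EdgeType
  ok : ∀ i : Fin n, edgeOK G (e i) (f i.castSucc) (f i.succ)

/-- The interior vertex `f (i+1)` is a collider on the path: both incident edges
have an arrowhead at it. -/
def GPath.colliderAt {G : ADMG V} {x y : V} (w : GPath G x y)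
    (i : ℕ) (h : i + 1 < w.n) : Prop :=
  arrowAtRight (w.e ⟨i, by omega⟩) ∧ arrowAtLeft (w.e ⟨i + 1, h⟩)

/-- The path is blocked by `C`: some interior non-collider is in `C`, or some interior
collider is outside `an_G(C)`. -/
def GPath.Blocked {G : ADMG V} {x y : V} (w : GPath G x y) (C : Finset V) : Prop :=
  ∃ (i : ℕ) (h : i + 1 < w.n),
    (¬ w.colliderAt i h ∧ w.f ⟨i + 1, by omega⟩ ∈ C) ∨
    (w.colliderAt i h ∧ w.f ⟨i + 1, by omega⟩ ∉ G.anc C)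

/-- m-separation of `A` and `B` given `C` in `G`. -/
def MSep (G : ADMG V) (A B C : Finset V) : Prop :=
  ∀ a ∈ A, ∀ b ∈ B, ∀ w : GPath G a b, w.Blocked C

lemma ADMG.rtg_antisymm (G : ADMG V) {a b : V}
    (h1 : Relation.ReflTransGen G.dir a b) (h2 : Relation.ReflTransGen G.dir b a) :
    a = b := by
  rcases (Relation.reflTransGen_iff_eq_or_transGen.mp h1) with h | h
  · exact h.symm
  · exact absurd (h.trans_right h2) (G.acyclic b)

lemma ADMG.mem_anc_iff (G : ADMG V) {A : Finset V} {w : V} :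
    w ∈ G.anc A ↔ ∃ a ∈ A, Relation.ReflTransGen G.dir w a := by
  simp [ADMG.anc]

lemma ADMG.union_tail_subset_anc (G : ADMG V) (H : Finset V) :
    H ∪ G.tail H ⊆ G.anc H := by
  intro v hv
  rw [ADMG.mem_anc_iff]
  rcases Finset.mem_union.mp hv with hv | hv
  · exact ⟨v, hv, Relation.ReflTransGen.refl⟩
  · rcases Finset.mem_union.mp hv with hv | hv
    · -- v ∈ pa(D)
      simp only [ADMG.pa, Finset.mem_filter, Finset.mem_univ, true_and] at hv
      obtain ⟨d, hd, hvd⟩ := hv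
      simp only [ADMG.disIn, Finset.mem_filter, Finset.mem_univ, true_and] at hd
      obtain ⟨a, haH, -, hdS, -⟩ := hd
      rw [ADMG.mem_anc_iff] at hdS
      obtain ⟨b, hbH, hdb⟩ := hdS
      exact ⟨b, hbH, Relation.ReflTransGen.head hvd hdb⟩
    · -- v ∈ D \ H
      have hv' := (Finset.mem_sdiff.mp hv).1
      simp only [ADMG.disIn, Finset.mem_filter, Finset.mem_univ, true_and] at hv'
      obtain ⟨a, haH, -, hvS, -⟩ := hv'
      exact (G.mem_anc_iff).mp hvS

/-- for a head `H` with tail `T`, `H = barren_G(H ∪ T)`. -/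
theorem head_eq_barren_head_union_tail (G : ADMG V) (H : Finset V)
    (hH : G.IsHead H) :
    H = G.barren (H ∪ G.tail H) := by
  obtain ⟨-, hbar, -⟩ := hH
  ext v
  constructor
  · intro hvH
    have hvcond : G.dec {v} ∩ H = {v} := by
      have : v ∈ G.barren H := by rw [show G.barren H = H from hbar]; exact hvH
      exact (Finset.mem_filter.mp this).2
    refine Finset.mem_filter.mpr ⟨Finset.mem_union_left _ hvH, ?_⟩
    ext w
    simp only [ADMG.dec, Finset.mem_inter, Finset.mem_filter, Finset.mem_univ, true_and,
      Finset.mem_singleton]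
    constructor
    · rintro ⟨⟨a, ha, hvw⟩, hwU⟩
      rw [ha] at hvw
      obtain ⟨b, hbH, hwb⟩ := (G.mem_anc_iff).mp (G.union_tail_subset_anc H hwU)
      have hbv : b = v := by
        have : b ∈ G.dec {v} ∩ H := by
          refine Finset.mem_inter.mpr ⟨?_, hbH⟩
          simp only [ADMG.dec, Finset.mem_filter, Finset.mem_univ, true_and,
            Finset.mem_singleton]
          exact ⟨v, rfl, hvw.trans hwb⟩
        simpa [hvcond] using this
      rw [hbv] at hwb
      exact G.rtg_antisymm hwb hvw
    · rintro rfl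
      exact ⟨⟨w, rfl, Relation.ReflTransGen.refl⟩,
        Finset.mem_union_left _ hvH⟩
  · intro hv
    obtain ⟨hvU, hvcond⟩ := Finset.mem_filter.mp hv
    obtain ⟨a, haH, hva⟩ := (G.mem_anc_iff).mp (G.union_tail_subset_anc H hvU)
    have : a ∈ G.dec {v} ∩ (H ∪ G.tail H) := by
      refine Finset.mem_inter.mpr ⟨?_, Finset.mem_union_left _ haH⟩
      simp only [ADMG.dec, Finset.mem_filter, Finset.mem_univ, true_and,
        Finset.mem_singleton]
      exact ⟨v, rfl, hva⟩
    rw [hvcond, Finset.mem_singleton] at this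
    exact this ▸ haH
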